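/- Let $\Phi : \mathbb{R} \to \mathbb{R}$ be $2\pi$-periodic, integrable on $[0, 2\pi]$, and let $U(re^{i\vartheta}) = \frac{1}{2\pi}\int_0^{2\pi} \frac{1-r^2}{1 - 2r\cos(\vartheta - t) + r^2}\,\Phi(t)\,dt$ be its Poisson integral in the unit disk. If $\Phi$ is differentiable at $\vartheta_0$, then $\frac{\partial U}{\partial \vartheta}(re^{i\vartheta_0}) \to \Phi'(\vartheta_0)$ as $r \to 1^-$ (radial limit). -/

import Mathlib

open MeasureTheory Filter Real intervalIntegral

/-- The Poisson integral of `Φ` in the unit disk, in polar coordinates. -/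
noncomputable def poissonInt (Φ : ℝ → ℝ) (r θ : ℝ) : ℝ :=
  (1 / (2 * π)) * ∫ t in (0 : ℝ)..(2 * π),
    ((1 - r ^ 2) / (1 - 2 * r * Real.cos (θ - t) + r ^ 2)) * Φ t

noncomputable def pkD (r s : ℝ) : ℝ := 1 - 2 * r * Real.cos s + r ^ 2
noncomputable def pk (r s : ℝ) : ℝ := (1 - r ^ 2) / pkD r s
noncomputable def Hk (r s : ℝ) : ℝ := s + 2 * Real.arctan (r * Real.sin s / (1 - r * Real.cos s))

lemma pkD_pos' {r : ℝ} (h0 : 0 ≤ r) (h1 : r < 1) (s : ℝ) : 0 < pkD r s := by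
  have := Real.cos_le_one s; have := Real.neg_one_le_cos s; unfold pkD; nlinarith

lemma one_sub_rcos_pos {r : ℝ} (h0 : 0 ≤ r) (h1 : r < 1) (s : ℝ) : 0 < 1 - r * Real.cos s := by
  have := Real.cos_le_one s; have := Real.neg_one_le_cos s; nlinarith

lemma hasDerivAt_Hk {r : ℝ} (h0 : 0 ≤ r) (h1 : r < 1) (s : ℝ) :
    HasDerivAt (fun s => Hk r s) (pk r s) s := by
  have hden := one_sub_rcos_pos h0 h1 s
  have hnum : HasDerivAt (fun s => r * Real.sin s) (r * Real.cos s) s :=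
    (Real.hasDerivAt_sin s).const_mul r
  have hden' : HasDerivAt (fun s => 1 - r * Real.cos s) (r * Real.sin s) s := by
    have := ((hasDerivAt_const s (1:ℝ)).sub ((Real.hasDerivAt_cos s).const_mul r))
    refine this.congr_deriv ?_; ring
  have hu : HasDerivAt (fun s => r * Real.sin s / (1 - r * Real.cos s))
      ((r * Real.cos s * (1 - r * Real.cos s) - r * Real.sin s * (r * Real.sin s)) /
        (1 - r * Real.cos s) ^ 2) s := hnum.div hden' hden.ne'
  have ha := (hu.arctan).const_mul 2
  have h := (hasDerivAt_id s).add ha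
  refine h.congr_deriv ?_
  have hsc := Real.sin_sq_add_cos_sq s
  have hD := pkD_pos' h0 h1 s
  unfold pk pkD at *
  field_simp
  linear_combination (-2*r^2*(1 - r*Real.cos s)) * hsc

noncomputable def Qk (r s : ℝ) : ℝ := -((1 - r ^ 2) * (2 * r * Real.sin s)) / pkD r s ^ 2

lemma hasDerivAt_pk' {r : ℝ} (h0 : 0 ≤ r) (h1 : r < 1) (s : ℝ) :
    HasDerivAt (fun s => pk r s) (Qk r s) s := by
  have hD : HasDerivAt (fun s => pkD r s) (2 * r * Real.sin s) s := by
    have h : HasDerivAt (fun s => 1 - 2 * r * Real.cos s + r ^ 2)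
        (0 - 2 * r * (-Real.sin s) + 0) s :=
      (((hasDerivAt_const s (1:ℝ)).sub ((Real.hasDerivAt_cos s).const_mul (2*r))).add
        (hasDerivAt_const s (r^2)))
    refine h.congr_deriv ?_; ring
  have h := (hasDerivAt_const s (1 - r^2)).div hD (pkD_pos' h0 h1 s).ne'
  refine h.congr_deriv ?_
  unfold Qk; field_simp; ring

lemma cont_pk {r : ℝ} (h0 : 0 ≤ r) (h1 : r < 1) : Continuous (pk r) :=
  continuous_const.div (by unfold pkD; continuity) (fun s => (pkD_pos' h0 h1 s).ne')

lemma cont_Qk {r : ℝ} (h0 : 0 ≤ r) (h1 : r < 1) : Continuous (Qk r) := by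
  unfold Qk
  exact (by continuity : Continuous fun s => -((1 - r ^ 2) * (2 * r * Real.sin s))).div
    (by unfold pkD; continuity) (fun s => (pow_ne_zero 2 (pkD_pos' h0 h1 s).ne'))

lemma pk_neg (r s : ℝ) : pk r (-s) = pk r s := by unfold pk pkD; rw [Real.cos_neg]

lemma int_Qk {r : ℝ} (h0 : 0 ≤ r) (h1 : r < 1) : ∫ s in (-π)..π, Qk r s = 0 := by
  rw [intervalIntegral.integral_eq_sub_of_hasDerivAt
    (fun s _ => hasDerivAt_pk' h0 h1 s) ((cont_Qk h0 h1).intervalIntegrable _ _)]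
  rw [pk_neg]; ring

lemma Hk_pi {r : ℝ} : Hk r π = π := by
  unfold Hk; simp [Real.sin_pi]

lemma Hk_neg_pi {r : ℝ} : Hk r (-π) = -π := by
  unfold Hk; simp [Real.sin_pi]

lemma int_pk {r : ℝ} (h0 : 0 ≤ r) (h1 : r < 1) : ∫ s in (-π)..π, pk r s = 2 * π := by
  rw [intervalIntegral.integral_eq_sub_of_hasDerivAt
    (fun s _ => hasDerivAt_Hk h0 h1 s) ((cont_pk h0 h1).intervalIntegrable _ _)]
  rw [Hk_pi, Hk_neg_pi]; ring

lemma int_neg_s_Qk {r : ℝ} (h0 : 0 ≤ r) (h1 : r < 1) :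
    ∫ s in (-π)..π, (-s) * Qk r s = 2 * π - 2 * π * pk r π := by
  have hF : ∀ s ∈ Set.uIcc (-π) π, HasDerivAt (fun s => Hk r s - s * pk r s) ((-s) * Qk r s) s := by
    intro s _
    have h := (hasDerivAt_Hk h0 h1 s).sub ((hasDerivAt_id s).mul (hasDerivAt_pk' h0 h1 s))
    refine h.congr_deriv ?_; simp
  rw [intervalIntegral.integral_eq_sub_of_hasDerivAt hF
    ((continuous_neg.mul (cont_Qk h0 h1)).intervalIntegrable _ _)]
  rw [Hk_pi, Hk_neg_pi, pk_neg]; ring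

lemma periodic_intervalIntegrable {Φ : ℝ → ℝ} {T : ℝ} (hT : 0 < T)
    (hper : Function.Periodic Φ T)
    (hint : IntervalIntegrable Φ volume 0 T) (a b : ℝ) :
    IntervalIntegrable Φ volume a b := by
  have step1 : ∀ n : ℤ, IntervalIntegrable Φ volume (n * T) (n * T + T) := by
    intro n
    have h := hint.comp_sub_right (n * T)
    have he : (fun x => Φ (x - n * T)) = Φ := funext fun x => hper.sub_int_mul_eq n
    rw [he] at h
    simpa [zero_add, add_comm] using h
  have step2 : ∀ n : ℤ, IntervalIntegrable Φ volume 0 (n * T) := by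
    intro n
    induction n using Int.induction_on with
    | zero => simp
    | succ k ih =>
      have hs := step1 k
      push_cast at hs ih ⊢
      rw [show ((k:ℝ) + 1) * T = (k:ℝ) * T + ((k:ℝ) * T + T - (k:ℝ)*T) by ring]
      rw [show (k:ℝ) * T + ((k:ℝ) * T + T - (k:ℝ)*T) = (k:ℝ)*T + T by ring]
      exact ih.trans hs
    | pred k ih =>
      have hs := step1 (-(k:ℤ) - 1)
      push_cast at hs ih ⊢
      rw [show (-(k:ℝ) - 1) * T = (-(k:ℝ) - 1) * T + T - T by ring]
      have hs' : IntervalIntegrable Φ volume (-(k:ℝ) * T) ((-(k:ℝ) - 1) * T) := by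
        have : (-(k:ℝ) - 1) * T + T = -(k:ℝ) * T := by ring
        rw [← this]
        exact hs.symm
      rw [show (-(k:ℝ) - 1) * T + T - T = (-(k:ℝ) - 1) * T by ring]
      exact ih.trans hs'
  obtain ⟨N, hN⟩ := exists_nat_ge (max (|a|) (|b|) / T)
  have hNT : max (|a|) (|b|) ≤ N * T := (div_le_iff₀ hT).mp hN
  have hup := step2 (N : ℤ)
  have hdown := step2 (-(N : ℤ))
  push_cast at hup hdown
  have h := hdown.symm.trans hup
  rw [show -(N:ℝ) * T = -((N:ℝ) * T) by ring] at h
  have hle : -((N : ℝ) * T) ≤ (N : ℝ) * T := by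
    have : (0:ℝ) ≤ (N : ℝ) * T := by positivity
    linarith
  refine h.mono_set (Set.uIcc_subset_uIcc ?_ ?_)
  · rw [Set.uIcc_of_le hle]
    have : |a| ≤ (N:ℝ)*T := le_trans (le_max_left _ _) hNT
    exact ⟨by linarith [neg_abs_le a], by linarith [le_abs_self a]⟩
  · rw [Set.uIcc_of_le hle]
    have : |b| ≤ (N:ℝ)*T := le_trans (le_max_right _ _) hNT
    exact ⟨by linarith [neg_abs_le b], by linarith [le_abs_self b]⟩

lemma pkD_ge {r : ℝ} (h0 : 0 ≤ r) (s : ℝ) : (1 - r)^2 ≤ pkD r s := by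
  have := Real.cos_le_one s
  unfold pkD; nlinarith

lemma Qk_bound {r : ℝ} (h0 : 0 ≤ r) (h1 : r < 1) (s : ℝ) :
    |Qk r s| ≤ (1 - r ^ 2) * (2 * r) / (1 - r) ^ 4 := by
  have hDpos := pkD_pos' h0 h1 s
  have hD := pkD_ge h0 s
  have h4 : (1 - r) ^ 4 ≤ pkD r s ^ 2 := by nlinarith
  have h1r : (0:ℝ) ≤ 1 - r ^ 2 := by nlinarith
  have hr4 : (0:ℝ) < (1 - r) ^ 4 := by
    have : (0:ℝ) < 1 - r := by linarith
    positivity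
  unfold Qk
  rw [abs_div, abs_of_nonneg (sq_nonneg (pkD r s))]
  apply div_le_div₀ (by positivity) _ hr4 h4
  rw [abs_neg, abs_mul, abs_of_nonneg h1r, abs_mul,
    abs_of_nonneg (by positivity : (0:ℝ) ≤ 2*r)]
  have hsin := Real.abs_sin_le_one s
  have h2r : (0:ℝ) ≤ 2 * r := by linarith
  calc (1 - r ^ 2) * (2 * r * |Real.sin s|) ≤ (1 - r ^ 2) * (2 * r * 1) :=
        mul_le_mul_of_nonneg_left (mul_le_mul_of_nonneg_left hsin h2r) h1r
    _ = (1 - r ^ 2) * (2 * r) := by ring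

lemma hasDerivAt_poissonInt {Φ : ℝ → ℝ} {r : ℝ} (h0 : 0 ≤ r) (h1 : r < 1)
    (hint : IntervalIntegrable Φ volume 0 (2 * π)) (θ₀ : ℝ) :
    HasDerivAt (fun θ => poissonInt Φ r θ)
      ((1 / (2 * π)) * ∫ t in (0:ℝ)..(2 * π), Qk r (θ₀ - t) * Φ t) θ₀ := by
  have hmeasΦ : AEStronglyMeasurable Φ (volume.restrict (Set.uIoc (0:ℝ) (2*π))) := by
    rw [Set.uIoc_of_le (by positivity : (0:ℝ) ≤ 2*π)]
    exact hint.1.aestronglyMeasurable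
  have key := intervalIntegral.hasDerivAt_integral_of_dominated_loc_of_deriv_le
    (F := fun x t => pk r (x - t) * Φ t) (F' := fun x t => Qk r (x - t) * Φ t)
    (x₀ := θ₀) (a := (0:ℝ)) (b := 2*π) (μ := volume)
    (bound := fun t => ((1 - r ^ 2) * (2 * r) / (1 - r) ^ 4) * |Φ t|)
    (s := Metric.ball θ₀ 1) (Metric.ball_mem_nhds θ₀ one_pos)
    ?_ ?_ ?_ ?_ ?_ ?_
  · have h := key.2.const_mul (1 / (2 * π))
    have he : (fun θ => poissonInt Φ r θ)
        = fun x => (1 / (2*π)) * ∫ t in (0:ℝ)..(2*π), pk r (x - t) * Φ t := by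
      funext θ; unfold poissonInt pk pkD; norm_num
    rw [he]
    exact h
  · filter_upwards with x
    exact (((cont_pk h0 h1).comp (continuous_const.sub continuous_id)).aestronglyMeasurable.restrict).mul hmeasΦ
  · exact hint.continuousOn_mul ((cont_pk h0 h1).comp (continuous_const.sub continuous_id)).continuousOn
  · exact (((cont_Qk h0 h1).comp (continuous_const.sub continuous_id)).aestronglyMeasurable.restrict).mul hmeasΦ
  · filter_upwards with t _ x _
    rw [norm_mul]
    apply mul_le_mul_of_nonneg_right (by simpa using Qk_bound h0 h1 (x - t)) (norm_nonneg _)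
  · exact (hint.abs).const_mul _
  · filter_upwards with t _ x _
    have h := ((hasDerivAt_pk' h0 h1 (x - t)).comp x ((hasDerivAt_id x).sub_const t)).mul_const (Φ t)
    refine h.congr_deriv ?_
    simp

lemma Qk_periodic (r : ℝ) : Function.Periodic (Qk r) (2 * π) := by
  intro s; unfold Qk pkD
  rw [Real.cos_add_two_pi, Real.sin_add_two_pi]

lemma change_var {Φ : ℝ → ℝ} {r : ℝ} (hper : Function.Periodic Φ (2 * π)) (θ₀ : ℝ) :
    (∫ t in (0:ℝ)..(2 * π), Qk r (θ₀ - t) * Φ t)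
      = ∫ s in (-π)..π, Qk r s * Φ (θ₀ - s) := by
  have h1 : (fun t => Qk r (θ₀ - t) * Φ t) = fun t => (fun s => Qk r s * Φ (θ₀ - s)) (θ₀ - t) := by
    funext t
    simp [show θ₀ - (θ₀ - t) = t by ring]
  rw [h1, intervalIntegral.integral_comp_sub_left (fun s => Qk r s * Φ (θ₀ - s)) θ₀]
  have hperf : Function.Periodic (fun s => Qk r s * Φ (θ₀ - s)) (2 * π) := by
    intro s
    have h2 : θ₀ - (s + 2 * π) = (θ₀ - s) - 2 * π := by ring
    simp only [Qk_periodic r s, h2, hper.sub_eq]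
  have := hperf.intervalIntegral_add_eq (θ₀ - 2 * π) (-π)
  rw [show θ₀ - 2 * π + 2 * π = θ₀ by ring, show -π + 2 * π = π by ring] at this
  rw [show θ₀ - 2 * π = θ₀ - 2*π by rfl] at this
  convert this using 2
  ring

lemma decomposition {Φ : ℝ → ℝ} {r : ℝ} (h0 : 0 ≤ r) (h1 : r < 1)
    (ΦintAll : ∀ a b, IntervalIntegrable Φ volume a b) (θ₀ L : ℝ) :
    (∫ s in (-π)..π, Qk r s * Φ (θ₀ - s))
      = (∫ s in (-π)..π, Qk r s * (Φ (θ₀ - s) - Φ θ₀ + L * s))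
        + L * (2 * π - 2 * π * pk r π) := by
  have hgi : IntervalIntegrable (fun s => Φ (θ₀ - s)) volume (-π) π := by
    have h := (ΦintAll (θ₀ + π) (θ₀ - π)).comp_sub_left θ₀
    rw [show θ₀ - (θ₀ + π) = -π by ring, show θ₀ - (θ₀ - π) = π by ring] at h
    exact h
  have hg : IntervalIntegrable (fun s => Φ (θ₀ - s) - Φ θ₀ + L * s) volume (-π) π :=
    (hgi.sub intervalIntegrable_const).add
      ((continuous_const.mul continuous_id).intervalIntegrable _ _)
  have hQg : IntervalIntegrable (fun s => Qk r s * (Φ (θ₀ - s) - Φ θ₀ + L * s)) volume (-π) π :=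
    hg.continuousOn_mul (cont_Qk h0 h1).continuousOn
  have hQc : IntervalIntegrable (fun s => Φ θ₀ * Qk r s) volume (-π) π :=
    (continuous_const.mul (cont_Qk h0 h1)).intervalIntegrable _ _
  have hQL : IntervalIntegrable (fun s => L * ((-s) * Qk r s)) volume (-π) π :=
    (continuous_const.mul (continuous_neg.mul (cont_Qk h0 h1))).intervalIntegrable _ _
  have hsplit : (fun s => Qk r s * Φ (θ₀ - s))
      = fun s => Qk r s * (Φ (θ₀ - s) - Φ θ₀ + L * s) + Φ θ₀ * Qk r s + L * ((-s) * Qk r s) := by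
    funext s; ring
  rw [hsplit, intervalIntegral.integral_add (hQg.add hQc) hQL,
    intervalIntegral.integral_add hQg hQc, intervalIntegral.integral_const_mul,
    intervalIntegral.integral_const_mul, int_Qk h0 h1, int_neg_s_Qk h0 h1]
  ring

lemma cos_lt_one_of {δ : ℝ} (h0 : 0 < δ) (h1 : δ ≤ π) : Real.cos δ < 1 := by
  have hs : 0 < Real.sin (δ / 2) :=
    Real.sin_pos_of_pos_of_lt_pi (by linarith) (by linarith [Real.pi_pos])
  have h2 := Real.cos_two_mul (δ / 2)
  have h3 := Real.sin_sq_add_cos_sq (δ / 2)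
  have h4 : 2 * (δ / 2) = δ := by ring
  rw [h4] at h2
  nlinarith

lemma pk_nonneg {r : ℝ} (h0 : 0 ≤ r) (h1 : r < 1) (s : ℝ) : 0 ≤ pk r s := by
  have := pkD_pos' h0 h1 s
  unfold pk
  apply div_nonneg (by nlinarith) this.le

lemma s_mul_Qk_nonpos {r : ℝ} (h0 : 0 ≤ r) (h1 : r < 1) {s : ℝ}
    (hs : -π ≤ s) (hs' : s ≤ π) : s * Qk r s ≤ 0 := by
  have hD := pkD_pos' h0 h1 s
  have hss : 0 ≤ s * Real.sin s := by
    rcases le_or_gt 0 s with h | h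
    · exact mul_nonneg h (Real.sin_nonneg_of_nonneg_of_le_pi h hs')
    · have : 0 ≤ (-s) * Real.sin (-s) :=
        mul_nonneg (by linarith) (Real.sin_nonneg_of_nonneg_of_le_pi (by linarith) (by linarith))
      rw [Real.sin_neg] at this; nlinarith
  have h1r : (0:ℝ) ≤ 1 - r ^ 2 := by nlinarith
  unfold Qk
  have he : s * (-((1 - r ^ 2) * (2 * r * Real.sin s)) / pkD r s ^ 2)
      = -((1 - r ^ 2) * (2 * r) * (s * Real.sin s)) / pkD r s ^ 2 := by ring
  rw [he]
  apply div_nonpos_of_nonpos_of_nonneg _ (sq_nonneg _)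
  have : 0 ≤ (1 - r ^ 2) * (2 * r) * (s * Real.sin s) :=
    mul_nonneg (mul_nonneg h1r (by linarith)) hss
  linarith

lemma Qk_tail_bound {r δ : ℝ} (h0 : 0 ≤ r) (h1 : r < 1)
    (hδ0 : 0 < δ) (hδπ : δ ≤ π) (hr : (1 + Real.cos δ) / 2 ≤ r) {s : ℝ}
    (hs : δ ≤ |s|) (hs' : |s| ≤ π) :
    |Qk r s| ≤ 2 * (1 - r ^ 2) / ((1 - Real.cos δ) / 2) ^ 4 := by
  have hc1 : Real.cos δ < 1 := cos_lt_one_of hδ0 hδπ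
  set c₁ := (1 - Real.cos δ) / 2 with hc₁
  have hc₁pos : 0 < c₁ := by rw [hc₁]; linarith
  have hcos : Real.cos s ≤ Real.cos δ := by
    have h := Real.cos_le_cos_of_nonneg_of_le_pi hδ0.le hs' hs
    rwa [Real.cos_abs] at h
  have hrc : c₁ ≤ r - Real.cos s := by rw [hc₁]; linarith
  have hDlb : c₁ ^ 2 ≤ pkD r s := by
    have hsc := Real.sin_sq_add_cos_sq s
    have : pkD r s = (r - Real.cos s) ^ 2 + Real.sin s ^ 2 := by unfold pkD; nlinarith
    nlinarith [sq_nonneg (Real.sin s)]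
  have hD4 : c₁ ^ 4 ≤ pkD r s ^ 2 := by nlinarith [pkD_pos' h0 h1 s]
  have h1r : (0:ℝ) ≤ 1 - r ^ 2 := by nlinarith
  unfold Qk
  rw [abs_div, abs_of_nonneg (sq_nonneg (pkD r s))]
  apply div_le_div₀ (by positivity) _ (by positivity) hD4
  rw [abs_neg, abs_mul, abs_of_nonneg h1r, abs_mul,
    abs_of_nonneg (by positivity : (0:ℝ) ≤ 2 * r)]
  have hsin := Real.abs_sin_le_one s
  have h2 : 2 * r * |Real.sin s| ≤ 2 := by nlinarith [abs_nonneg (Real.sin s)]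
  nlinarith [mul_le_mul_of_nonneg_left h2 h1r]

set_option maxHeartbeats 2000000 in
lemma main_tendsto {Φ : ℝ → ℝ} (ΦintAll : ∀ a b, IntervalIntegrable Φ volume a b)
    {θ₀ L : ℝ} (hd : HasDerivAt Φ L θ₀) :
    Tendsto (fun r => ∫ s in (-π)..π, Qk r s * (Φ (θ₀ - s) - Φ θ₀ + L * s))
      (nhdsWithin 1 (Set.Iio 1)) (nhds 0) := by
  set g : ℝ → ℝ := fun s => Φ (θ₀ - s) - Φ θ₀ + L * s with hgdef
  have hgi : IntervalIntegrable g volume (-π) π := by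
    have h := (ΦintAll (θ₀ + π) (θ₀ - π)).comp_sub_left θ₀
    rw [show θ₀ - (θ₀ + π) = -π by ring, show θ₀ - (θ₀ - π) = π by ring] at h
    exact (h.sub intervalIntegrable_const).add
      ((continuous_const.mul continuous_id).intervalIntegrable _ _)
  have hgabs : IntervalIntegrable (fun s => |g s|) volume (-π) π := hgi.abs
  set M : ℝ := ∫ s in (-π)..π, |g s| with hM
  have hM0 : 0 ≤ M :=
    intervalIntegral.integral_nonneg (by linarith [Real.pi_pos]) (fun _ _ => abs_nonneg _)
  rw [NormedAddCommGroup.tendsto_nhds_zero]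
  intro ε hε
  set ε₁ := ε / (4 * π + 1) with hε₁def
  have hε₁ : 0 < ε₁ := div_pos hε (by linarith [Real.pi_pos])
  have hlo := (hasDerivAt_iff_isLittleO.mp hd).def hε₁
  have htend : Tendsto (fun s : ℝ => θ₀ - s) (nhds 0) (nhds θ₀) := by
    have h := ((continuous_const (y := θ₀)).sub continuous_id).tendsto (0:ℝ)
    simpa [Pi.sub_def] using h
  have hlo2 : ∀ᶠ s in nhds (0:ℝ), |g s| ≤ ε₁ * |s| := by
    filter_upwards [htend.eventually hlo] with s h
    simp only [smul_eq_mul, Real.norm_eq_abs] at h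
    rw [show θ₀ - s - θ₀ = -s by ring] at h
    have he : Φ (θ₀ - s) - Φ θ₀ - (-s) * L = g s := by rw [hgdef]; ring
    rw [he, abs_neg] at h
    exact h
  obtain ⟨δ₀, hδ₀, hδball⟩ := Metric.eventually_nhds_iff.mp hlo2
  set δ := min (δ₀ / 2) π with hδdef
  have hδpos : 0 < δ := lt_min (by linarith) Real.pi_pos
  have hδπ : δ ≤ π := min_le_right _ _
  have hδsmall : ∀ s : ℝ, |s| ≤ δ → |g s| ≤ ε₁ * |s| := by
    intro s hs
    apply hδball
    rw [Real.dist_eq, sub_zero]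
    calc |s| ≤ δ := hs
      _ ≤ δ₀ / 2 := min_le_left _ _
      _ < δ₀ := by linarith
  set c₁ := (1 - Real.cos δ) / 2 with hc₁def
  have hcδ : Real.cos δ < 1 := cos_lt_one_of hδpos hδπ
  have hc₁pos : 0 < c₁ := by rw [hc₁def]; linarith
  set rlow := max ((1 + Real.cos δ) / 2) 0 with hrlowdef
  have hrlow1 : rlow < 1 := by
    rw [hrlowdef]
    apply max_lt _ one_pos
    linarith
  have hBtend : Tendsto (fun r : ℝ => 2 * (1 - r ^ 2) / c₁ ^ 4 * M)
      (nhdsWithin 1 (Set.Iio 1)) (nhds 0) := by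
    have hc : Continuous (fun r : ℝ => 2 * (1 - r ^ 2) / c₁ ^ 4 * M) := by
      apply Continuous.mul _ continuous_const
      apply Continuous.div_const
      continuity
    have h := hc.continuousAt (x := (1:ℝ))
    rw [ContinuousAt] at h
    rw [show (2 * (1 - (1:ℝ) ^ 2) / c₁ ^ 4 * M) = 0 by norm_num] at h
    exact h.mono_left nhdsWithin_le_nhds
  have hev1 : ∀ᶠ r in nhdsWithin (1:ℝ) (Set.Iio 1), 2 * (1 - r ^ 2) / c₁ ^ 4 * M < ε₁ :=
    hBtend.eventually (Filter.Tendsto.eventually_lt_const hε₁ tendsto_id) |>.mono (fun _ h => h)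
  have hev2 : Set.Ioo rlow 1 ∈ nhdsWithin (1:ℝ) (Set.Iio 1) :=
    Ioo_mem_nhdsLT_of_mem ⟨hrlow1, le_refl 1⟩
  filter_upwards [hev1, hev2] with r hB hr
  obtain ⟨hrl, hr1⟩ := hr
  have h0r : 0 ≤ r := le_trans (le_max_right _ _) hrl.le
  have hrc : (1 + Real.cos δ) / 2 ≤ r := le_trans (le_max_left _ _) hrl.le
  have hQcont := cont_Qk h0r hr1
  have hQg : IntervalIntegrable (fun s => Qk r s * g s) volume (-π) π :=
    hgi.continuousOn_mul hQcont.continuousOn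
  have hsub1 : Set.uIcc (-π) (-δ) ⊆ Set.uIcc (-π) π := by
    apply Set.uIcc_subset_uIcc
    · rw [Set.uIcc_of_le (by linarith : -π ≤ π)]; exact ⟨le_refl _, by linarith⟩
    · rw [Set.uIcc_of_le (by linarith : -π ≤ π)]; exact ⟨by linarith, by linarith⟩
  have hsub2 : Set.uIcc (-δ) δ ⊆ Set.uIcc (-π) π := by
    apply Set.uIcc_subset_uIcc
    · rw [Set.uIcc_of_le (by linarith : -π ≤ π)]; exact ⟨by linarith, by linarith⟩
    · rw [Set.uIcc_of_le (by linarith : -π ≤ π)]; exact ⟨by linarith, by linarith⟩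
  have hsub3 : Set.uIcc δ π ⊆ Set.uIcc (-π) π := by
    apply Set.uIcc_subset_uIcc
    · rw [Set.uIcc_of_le (by linarith : -π ≤ π)]; exact ⟨by linarith, by linarith⟩
    · rw [Set.uIcc_of_le (by linarith : -π ≤ π)]; exact ⟨by linarith, le_refl _⟩
  have hsub4 : Set.uIcc (-δ) π ⊆ Set.uIcc (-π) π := by
    apply Set.uIcc_subset_uIcc
    · rw [Set.uIcc_of_le (by linarith : -π ≤ π)]; exact ⟨by linarith, by linarith⟩
    · rw [Set.uIcc_of_le (by linarith : -π ≤ π)]; exact ⟨by linarith, le_refl _⟩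
  have hsplit : (∫ s in (-π)..π, Qk r s * g s)
      = (∫ s in (-π)..(-δ), Qk r s * g s) + ((∫ s in (-δ)..δ, Qk r s * g s)
        + (∫ s in δ..π, Qk r s * g s)) := by
    rw [intervalIntegral.integral_add_adjacent_intervals (hQg.mono_set hsub2)
      (hQg.mono_set hsub3)]
    rw [intervalIntegral.integral_add_adjacent_intervals (hQg.mono_set hsub1)
      (hQg.mono_set hsub4)]
  -- right tail
  have hBnn : 0 ≤ 2 * (1 - r ^ 2) / c₁ ^ 4 := by
    apply div_nonneg _ (by positivity)
    nlinarith
  have htail_r : |∫ s in δ..π, Qk r s * g s| ≤ 2 * (1 - r ^ 2) / c₁ ^ 4 * M := by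
    have h1 := intervalIntegral.abs_integral_le_integral_abs (μ := volume) (f := fun s => Qk r s * g s) hδπ
    have h2 : (∫ s in δ..π, |Qk r s * g s|)
        ≤ ∫ s in δ..π, (2 * (1 - r ^ 2) / c₁ ^ 4) * |g s| := by
      apply intervalIntegral.integral_mono_on hδπ ((hQg.mono_set hsub3).abs)
        ((hgabs.mono_set hsub3).const_mul _)
      intro s hs
      rw [abs_mul]
      apply mul_le_mul_of_nonneg_right _ (abs_nonneg _)
      have habs : |s| = s := abs_of_nonneg (by linarith [hs.1, hδpos])
      exact Qk_tail_bound h0r hr1 hδpos hδπ hrc (by rw [habs]; exact hs.1)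
        (by rw [habs]; exact hs.2)
    rw [intervalIntegral.integral_const_mul] at h2
    have h4 : (∫ s in δ..π, |g s|) ≤ M :=
      intervalIntegral.integral_mono_interval (by linarith) hδπ (le_refl π)
        (Filter.Eventually.of_forall (fun s => abs_nonneg _)) hgabs
    calc |∫ s in δ..π, Qk r s * g s| ≤ _ := h1
      _ ≤ 2 * (1 - r ^ 2) / c₁ ^ 4 * ∫ s in δ..π, |g s| := h2
      _ ≤ 2 * (1 - r ^ 2) / c₁ ^ 4 * M := mul_le_mul_of_nonneg_left h4 hBnn
  -- left tail
  have htail_l : |∫ s in (-π)..(-δ), Qk r s * g s| ≤ 2 * (1 - r ^ 2) / c₁ ^ 4 * M := by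
    have h1 := intervalIntegral.abs_integral_le_integral_abs (μ := volume) (f := fun s => Qk r s * g s)
      (show -π ≤ -δ by linarith)
    have h2 : (∫ s in (-π)..(-δ), |Qk r s * g s|)
        ≤ ∫ s in (-π)..(-δ), (2 * (1 - r ^ 2) / c₁ ^ 4) * |g s| := by
      apply intervalIntegral.integral_mono_on (by linarith) ((hQg.mono_set hsub1).abs)
        ((hgabs.mono_set hsub1).const_mul _)
      intro s hs
      rw [abs_mul]
      apply mul_le_mul_of_nonneg_right _ (abs_nonneg _)
      have habs : |s| = -s := abs_of_nonpos (by linarith [hs.2, hδpos])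
      exact Qk_tail_bound h0r hr1 hδpos hδπ hrc
        (by rw [habs]; linarith [hs.2]) (by rw [habs]; linarith [hs.1])
    rw [intervalIntegral.integral_const_mul] at h2
    have h4 : (∫ s in (-π)..(-δ), |g s|) ≤ M :=
      intervalIntegral.integral_mono_interval (le_refl (-π)) (by linarith) (by linarith)
        (Filter.Eventually.of_forall (fun s => abs_nonneg _)) hgabs
    calc |∫ s in (-π)..(-δ), Qk r s * g s| ≤ _ := h1
      _ ≤ 2 * (1 - r ^ 2) / c₁ ^ 4 * ∫ s in (-π)..(-δ), |g s| := h2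
      _ ≤ 2 * (1 - r ^ 2) / c₁ ^ 4 * M := mul_le_mul_of_nonneg_left h4 hBnn
  -- center
  have hcen : |∫ s in (-δ)..δ, Qk r s * g s| ≤ ε₁ * (2 * π) := by
    have h1 := intervalIntegral.abs_integral_le_integral_abs (μ := volume) (f := fun s => Qk r s * g s)
      (show -δ ≤ δ by linarith)
    have hKcont : Continuous (fun s => ε₁ * ((-s) * Qk r s)) :=
      continuous_const.mul (continuous_neg.mul hQcont)
    have h2 : (∫ s in (-δ)..δ, |Qk r s * g s|)
        ≤ ∫ s in (-δ)..δ, ε₁ * ((-s) * Qk r s) := by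
      apply intervalIntegral.integral_mono_on (by linarith) ((hQg.mono_set hsub2).abs)
        (hKcont.intervalIntegrable _ _)
      intro s hs
      have hsd : |s| ≤ δ := abs_le.mpr ⟨hs.1, hs.2⟩
      have hg2 := hδsmall s hsd
      have hQnp : s * Qk r s ≤ 0 :=
        s_mul_Qk_nonpos h0r hr1 (by linarith [hs.1]) (by linarith [hs.2])
      calc |Qk r s * g s| = |g s| * |Qk r s| := by rw [abs_mul]; ring
        _ ≤ (ε₁ * |s|) * |Qk r s| := mul_le_mul_of_nonneg_right hg2 (abs_nonneg _)
        _ = ε₁ * |s * Qk r s| := by rw [abs_mul]; ring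
        _ = ε₁ * ((-s) * Qk r s) := by rw [abs_of_nonpos hQnp]; ring
    have h3 : (∫ s in (-δ)..δ, ε₁ * ((-s) * Qk r s))
        ≤ ∫ s in (-π)..π, ε₁ * ((-s) * Qk r s) := by
      apply intervalIntegral.integral_mono_interval (by linarith) (by linarith) hδπ
        _ (hKcont.intervalIntegrable _ _)
      filter_upwards [ae_restrict_mem measurableSet_Ioc] with s hs
      have hQnp : s * Qk r s ≤ 0 := s_mul_Qk_nonpos h0r hr1 (le_of_lt hs.1) hs.2
      show (0:ℝ) ≤ ε₁ * (-s * Qk r s)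
      nlinarith
    have h4 : (∫ s in (-π)..π, ε₁ * ((-s) * Qk r s)) = ε₁ * (2 * π - 2 * π * pk r π) := by
      rw [intervalIntegral.integral_const_mul, int_neg_s_Qk h0r hr1]
    have h5 : ε₁ * (2 * π - 2 * π * pk r π) ≤ ε₁ * (2 * π) := by
      apply mul_le_mul_of_nonneg_left _ hε₁.le
      have := pk_nonneg h0r hr1 π
      nlinarith [Real.pi_pos]
    calc |∫ s in (-δ)..δ, Qk r s * g s| ≤ _ := h1
      _ ≤ _ := h2
      _ ≤ _ := h3
      _ = _ := h4
      _ ≤ ε₁ * (2 * π) := h5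
  rw [Real.norm_eq_abs, hsplit]
  have hπ : 0 < π := Real.pi_pos
  calc |(∫ s in (-π)..(-δ), Qk r s * g s) + ((∫ s in (-δ)..δ, Qk r s * g s)
        + (∫ s in δ..π, Qk r s * g s))|
      ≤ |∫ s in (-π)..(-δ), Qk r s * g s| + |(∫ s in (-δ)..δ, Qk r s * g s)
        + (∫ s in δ..π, Qk r s * g s)| := abs_add_le _ _
    _ ≤ |∫ s in (-π)..(-δ), Qk r s * g s| + (|∫ s in (-δ)..δ, Qk r s * g s|
        + |∫ s in δ..π, Qk r s * g s|) := by linarith [abs_add_le (∫ s in (-δ)..δ, Qk r s * g s) (∫ s in δ..π, Qk r s * g s)]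
    _ < ε₁ + (ε₁ * (2 * π) + ε₁) := by
        have hb1 : |∫ s in (-π)..(-δ), Qk r s * g s| < ε₁ := lt_of_le_of_lt htail_l hB
        have hb2 : |∫ s in δ..π, Qk r s * g s| < ε₁ := lt_of_le_of_lt htail_r hB
        linarith
    _ ≤ ε := by
        rw [hε₁def]
        have h41 : (0:ℝ) < 4 * π + 1 := by linarith
        have he : ε / (4*π+1) + (ε / (4*π+1) * (2*π) + ε / (4*π+1))
            = ε * ((2 + 2*π) / (4*π+1)) := by ring
        rw [he]
        have hle : (2 + 2*π) / (4*π+1) ≤ 1 :=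
          (div_le_one h41).mpr (by nlinarith [Real.pi_gt_three])
        nlinarith

lemma pk_pi_tendsto : Tendsto (fun r : ℝ => pk r π) (nhdsWithin 1 (Set.Iio 1)) (nhds 0) := by
  have hc : ContinuousAt (fun r : ℝ => pk r π) 1 := by
    unfold pk pkD
    apply ContinuousAt.div
    · fun_prop
    · fun_prop
    · rw [Real.cos_pi]; norm_num
  have h0 : pk 1 π = 0 := by unfold pk; norm_num
  rw [ContinuousAt] at hc
  simp only [h0] at hc
  exact hc.mono_left nhdsWithin_le_nhds

/-- Fatou's theorem (radial case) for the angular derivative of the Poisson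
integral: if the `2π`-periodic integrable `Φ` is differentiable at `θ₀`, then
`∂U/∂θ(re^{iθ₀}) → Φ'(θ₀)` as `r → 1⁻`. -/
theorem fatou_angular_deriv_radial (Φ : ℝ → ℝ)
    (hper : ∀ t : ℝ, Φ (t + 2 * π) = Φ t)
    (hint : IntervalIntegrable Φ volume 0 (2 * π))
    (θ₀ L : ℝ) (hd : HasDerivAt Φ L θ₀) :
    Tendsto (fun r : ℝ => deriv (fun θ => poissonInt Φ r θ) θ₀)
      (nhdsWithin 1 (Set.Iio 1)) (nhds L) := by
  have hper' : Function.Periodic Φ (2 * π) := hper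
  have ΦintAll := periodic_intervalIntegrable Real.two_pi_pos hper' hint
  have heq : ∀ᶠ r in nhdsWithin (1:ℝ) (Set.Iio 1),
      ((1 / (2 * π)) * (∫ s in (-π)..π, Qk r s * (Φ (θ₀ - s) - Φ θ₀ + L * s))
          + L * (1 - pk r π))
        = deriv (fun θ => poissonInt Φ r θ) θ₀ := by
    filter_upwards [Ioo_mem_nhdsLT_of_mem
      (show (1:ℝ) ∈ Set.Ioc 0 1 from ⟨one_pos, le_refl 1⟩)] with r hr
    have h0r : 0 ≤ r := hr.1.le
    have hr1 : r < 1 := hr.2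
    rw [(hasDerivAt_poissonInt h0r hr1 hint θ₀).deriv]
    rw [change_var hper' θ₀, decomposition h0r hr1 ΦintAll θ₀ L]
    have hπ := Real.pi_pos
    generalize (∫ s in (-π)..π, Qk r s * (Φ (θ₀ - s) - Φ θ₀ + L * s)) = I
    field_simp
  have h1 : Tendsto (fun r : ℝ =>
      (1 / (2 * π)) * (∫ s in (-π)..π, Qk r s * (Φ (θ₀ - s) - Φ θ₀ + L * s)))
      (nhdsWithin 1 (Set.Iio 1)) (nhds ((1 / (2 * π)) * 0)) :=
    (main_tendsto ΦintAll hd).const_mul _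
  have h2 : Tendsto (fun r : ℝ => L * (1 - pk r π))
      (nhdsWithin 1 (Set.Iio 1)) (nhds (L * (1 - 0))) :=
    ((tendsto_const_nhds.sub pk_pi_tendsto).const_mul L)
  have h3 := h1.add h2
  rw [show (1 / (2*π)) * 0 + L * (1 - 0) = L by ring] at h3
  exact h3.congr' heq
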